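/- The function Ψ satisfies lim_{x→−∞} Ψ(x) = 0 and lim_{x→+∞} Ψ(x) = 1; together with its monotonicity and continuity, Ψ is a cumulative distribution function on ℝ. -/

import Mathlib

open Filter Topology

open Real Set

noncomputable def Psi (x : ℝ) : ℝ :=
  if x = 0 then 1 / 2 else (1 / x) * Real.log ((Real.exp x - 1) / x)

noncomputable def hfun (x : ℝ) : ℝ :=
  x * Real.exp x / (Real.exp x - 1) - 1 - Real.log ((Real.exp x - 1) / x)

-- basic facts
lemma expm1_ne {x : ℝ} (hx : x ≠ 0) : Real.exp x - 1 ≠ 0 := by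
  simpa [sub_eq_zero, Real.exp_eq_one_iff] using hx

lemma expm1_eq (x : ℝ) : Real.exp x - 1 = Real.exp (x/2) * (2 * Real.sinh (x/2)) := by
  rw [Real.sinh_eq, mul_div_cancel₀ _ (two_ne_zero), mul_sub,
    ← Real.exp_add, ← Real.exp_add]
  norm_num

lemma self_le_two_sinh {x : ℝ} (hx : 0 ≤ x) : x ≤ 2 * Real.sinh (x/2) := by
  have := Real.self_le_sinh_iff.2 (by linarith : (0:ℝ) ≤ x/2)
  linarith

lemma two_sinh_le_self {x : ℝ} (hx : x ≤ 0) : 2 * Real.sinh (x/2) ≤ x := by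
  have := Real.sinh_le_self_iff.2 (by linarith : x/2 ≤ (0:ℝ))
  linarith

-- key inequality: x^2 e^x ≤ (e^x-1)^2
lemma key2 (x : ℝ) : x^2 * Real.exp x ≤ (Real.exp x - 1)^2 := by
  have h1 : |x| ≤ 2 * Real.sinh (|x|/2) := self_le_two_sinh (abs_nonneg x)
  have h2 : |2 * Real.sinh (x/2)| = 2 * Real.sinh (|x|/2) := by
    rw [abs_mul, Real.abs_sinh, abs_two, abs_div, abs_two]
  have h3 : x^2 ≤ (2 * Real.sinh (x/2))^2 := by
    rw [← sq_abs x, ← sq_abs (2 * Real.sinh (x/2)), h2]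
    exact pow_le_pow_left₀ (abs_nonneg x) h1 2
  calc x^2 * Real.exp x ≤ (2 * Real.sinh (x/2))^2 * Real.exp x := by
        exact mul_le_mul_of_nonneg_right h3 (Real.exp_pos x).le
    _ = (Real.exp x - 1)^2 := by
        have hexp : Real.exp (x/2) ^ 2 = Real.exp x := by rw [sq, ← Real.exp_add]; norm_num
        rw [expm1_eq x]
        linear_combination (-(2 * Real.sinh (x/2))^2) * hexp

-- positivity of q
lemma q_pos {x : ℝ} (hx : x ≠ 0) : 0 < (Real.exp x - 1) / x := by
  rcases hx.lt_or_gt with h | h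
  · apply div_pos_of_neg_of_neg _ h
    have := Real.add_one_lt_exp hx
    nlinarith [Real.exp_lt_one_iff.2 h]
  · apply div_pos _ h
    nlinarith [Real.add_one_lt_exp hx]

lemma exp_half_le_q {x : ℝ} (hx : x ≠ 0) : Real.exp (x/2) ≤ (Real.exp x - 1) / x := by
  rcases hx.lt_or_gt with h | h
  · rw [le_div_iff_of_neg h, expm1_eq x]
    exact mul_le_mul_of_nonneg_left (two_sinh_le_self h.le) (Real.exp_pos _).le
  · rw [le_div_iff₀ h, expm1_eq x]
    exact mul_le_mul_of_nonneg_left (self_le_two_sinh h.le) (Real.exp_pos _).le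




lemma hasDerivAt_log_q {x : ℝ} (hx : x ≠ 0) :
    HasDerivAt (fun y => Real.log ((Real.exp y - 1) / y))
      ((Real.exp x * x - (Real.exp x - 1)) / (x * (Real.exp x - 1))) x := by
  have hq : HasDerivAt (fun y => (Real.exp y - 1) / y)
      ((Real.exp x * x - (Real.exp x - 1) * 1) / x ^ 2) x :=
    ((Real.hasDerivAt_exp x).sub_const 1).div (hasDerivAt_id x) hx
  have h2 := hq.log (ne_of_gt (q_pos hx))
  convert h2 using 1
  have ne1 := expm1_ne hx
  field_simp

lemma hasDerivAt_Psi {x : ℝ} (hx : x ≠ 0) : HasDerivAt Psi (hfun x / x ^ 2) x := by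
  have h1 : HasDerivAt (fun y => y⁻¹ * Real.log ((Real.exp y - 1) / y))
      (-(↑x ^ 2)⁻¹ * Real.log ((Real.exp x - 1) / x) +
        x⁻¹ * ((Real.exp x * x - (Real.exp x - 1)) / (x * (Real.exp x - 1)))) x :=
    (hasDerivAt_inv hx).mul (hasDerivAt_log_q hx)
  have hev : Psi =ᶠ[nhds x] fun y => y⁻¹ * Real.log ((Real.exp y - 1) / y) := by
    filter_upwards [isOpen_compl_singleton.mem_nhds (by simpa using hx)] with y hy
    simp only [Set.mem_compl_iff, Set.mem_singleton_iff] at hy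
    simp [Psi, if_neg hy, one_div]
  refine HasDerivAt.congr_of_eventuallyEq ?_ hev
  refine h1.congr_deriv ?_
  have ne1 := expm1_ne hx
  simp only [hfun]
  field_simp
  ring

lemma hasDerivAt_hfun {x : ℝ} (hx : x ≠ 0) :
    HasDerivAt hfun (1 / x - x * Real.exp x / (Real.exp x - 1) ^ 2) x := by
  have ne1 := expm1_ne hx
  have hnum : HasDerivAt (fun y => y * Real.exp y) (1 * Real.exp x + x * Real.exp x) x :=
    (hasDerivAt_id x).mul (Real.hasDerivAt_exp x)
  have hr : HasDerivAt (fun y => y * Real.exp y / (Real.exp y - 1))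
      (((1 * Real.exp x + x * Real.exp x) * (Real.exp x - 1) - x * Real.exp x * Real.exp x) /
        (Real.exp x - 1) ^ 2) x :=
    hnum.div ((Real.hasDerivAt_exp x).sub_const 1) ne1
  have h2 := (hr.sub_const 1).sub (hasDerivAt_log_q hx)
  refine h2.congr_deriv ?_
  field_simp
  ring

lemma deriv_hfun_eq {x : ℝ} (hx : x ≠ 0) :
    deriv hfun x = ((Real.exp x - 1) ^ 2 - x ^ 2 * Real.exp x) / (x * (Real.exp x - 1) ^ 2) := by
  rw [(hasDerivAt_hfun hx).deriv]
  have ne1 := expm1_ne hx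
  field_simp

lemma tendsto_q_one : Tendsto (fun x => (Real.exp x - 1) / x) (𝓝[≠] (0:ℝ)) (𝓝 1) := by
  have h := hasDerivAt_iff_tendsto_slope.1 (Real.hasDerivAt_exp 0)
  rw [Real.exp_zero] at h
  refine h.congr (fun y => ?_)
  simp [slope_def_field, Real.exp_zero]

lemma tendsto_hfun_zero : Tendsto hfun (𝓝[≠] (0:ℝ)) (𝓝 0) := by
  have hq := tendsto_q_one
  have h1 : Tendsto (fun x => Real.exp x * ((Real.exp x - 1) / x)⁻¹) (𝓝[≠] (0:ℝ)) (𝓝 1) := by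
    have he : Tendsto Real.exp (𝓝[≠] (0:ℝ)) (𝓝 1) := by
      simpa using (Real.continuous_exp.tendsto 0).mono_left
        (nhdsWithin_le_nhds : 𝓝[≠] (0:ℝ) ≤ 𝓝 0)
    simpa using he.mul (hq.inv₀ one_ne_zero)
  have h2 : Tendsto (fun x => Real.log ((Real.exp x - 1) / x)) (𝓝[≠] (0:ℝ)) (𝓝 0) := by
    have := (Real.continuousAt_log one_ne_zero).tendsto.comp hq
    simpa [Function.comp_def] using this
  have h3 : Tendsto (fun x => Real.exp x * ((Real.exp x - 1) / x)⁻¹ - 1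
      - Real.log ((Real.exp x - 1) / x)) (𝓝[≠] (0:ℝ)) (𝓝 0) := by
    have := (h1.sub_const 1).sub h2
    simpa using this
  refine h3.congr' ?_
  filter_upwards [self_mem_nhdsWithin] with y hy
  have hy' : y ≠ 0 := hy
  have ne1 := expm1_ne hy'
  simp only [hfun]
  field_simp

lemma hfun_nonneg {x : ℝ} (hx : x ≠ 0) : 0 ≤ hfun x := by
  rcases hx.lt_or_gt with h | h
  · -- antitone on Iio 0
    have mono : AntitoneOn hfun (Iio (0:ℝ)) := by
      refine antitoneOn_of_deriv_nonpos (convex_Iio 0) ?_ ?_ ?_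
      · intro y hy; exact ((hasDerivAt_hfun (ne_of_lt hy)).continuousAt).continuousWithinAt
      · intro y hy
        rw [interior_Iio] at hy
        exact (hasDerivAt_hfun (ne_of_lt hy)).differentiableAt.differentiableWithinAt
      · intro y hy
        rw [interior_Iio] at hy
        rw [deriv_hfun_eq (ne_of_lt hy)]
        apply div_nonpos_of_nonneg_of_nonpos
        · have := key2 y; linarith
        · have h2 : (0:ℝ) < (Real.exp y - 1) ^ 2 := by
            have := expm1_ne (ne_of_lt hy); positivity
          have hy0 : y < 0 := hy
          nlinarith
    have hev : ∀ᶠ t in 𝓝[<] (0:ℝ), hfun t ≤ hfun x := by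
      filter_upwards [Ioo_mem_nhdsLT_of_mem (show (0:ℝ) ∈ Ioc x 0 from ⟨h, le_refl 0⟩)] with t ht
      exact mono (show x ∈ Iio (0:ℝ) from h) (show t ∈ Iio (0:ℝ) from ht.2) ht.1.le
    exact le_of_tendsto (tendsto_hfun_zero.mono_left
      (nhdsWithin_mono (0:ℝ) (show Iio (0:ℝ) ⊆ {(0:ℝ)}ᶜ from fun y hy => ne_of_lt hy))) hev
  · have mono : MonotoneOn hfun (Ioi (0:ℝ)) := by
      refine monotoneOn_of_deriv_nonneg (convex_Ioi 0) ?_ ?_ ?_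
      · intro y hy; exact ((hasDerivAt_hfun (ne_of_gt hy)).continuousAt).continuousWithinAt
      · intro y hy
        rw [interior_Ioi] at hy
        exact (hasDerivAt_hfun (ne_of_gt hy)).differentiableAt.differentiableWithinAt
      · intro y hy
        rw [interior_Ioi] at hy
        rw [deriv_hfun_eq (ne_of_gt hy)]
        apply div_nonneg
        · have := key2 y; linarith
        · have h2 : (0:ℝ) < (Real.exp y - 1) ^ 2 := by
            have := expm1_ne (ne_of_gt hy); positivity
          have hy0 : 0 < y := hy
          nlinarith
    have hev : ∀ᶠ t in 𝓝[>] (0:ℝ), hfun t ≤ hfun x := by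
      filter_upwards [Ioo_mem_nhdsGT_of_mem (show (0:ℝ) ∈ Ico 0 x from ⟨le_refl 0, h⟩)] with t ht
      exact mono (show t ∈ Ioi (0:ℝ) from ht.1) (show x ∈ Ioi (0:ℝ) from h) ht.2.le
    exact le_of_tendsto (tendsto_hfun_zero.mono_left
      (nhdsWithin_mono (0:ℝ) (show Ioi (0:ℝ) ⊆ {(0:ℝ)}ᶜ from fun y hy => ne_of_gt hy))) hev

lemma log_q_ge {x : ℝ} (hx : x ≠ 0) : x / 2 ≤ Real.log ((Real.exp x - 1) / x) :=
  (Real.le_log_iff_exp_le (q_pos hx)).2 (exp_half_le_q hx)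

lemma half_le_Psi {x : ℝ} (h : 0 < x) : 1 / 2 ≤ Psi x := by
  rw [Psi, if_neg (ne_of_gt h)]
  have := mul_le_mul_of_nonneg_left (log_q_ge (ne_of_gt h)) (by positivity : (0:ℝ) ≤ 1 / x)
  calc (1:ℝ)/2 = 1/x * (x/2) := by field_simp
    _ ≤ _ := this

lemma Psi_le_half {x : ℝ} (h : x < 0) : Psi x ≤ 1 / 2 := by
  rw [Psi, if_neg (ne_of_lt h)]
  have h1 : (1:ℝ)/x ≤ 0 := by
    apply div_nonpos_of_nonneg_of_nonpos zero_le_one h.le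
  have := mul_le_mul_of_nonpos_left (log_q_ge (ne_of_lt h)) h1
  calc (1/x) * Real.log ((Real.exp x - 1) / x) ≤ 1/x * (x/2) := this
    _ = 1/2 := by
      field_simp
      exact div_self (ne_of_lt h)

lemma Psi_monotoneOn_Iio : MonotoneOn Psi (Iio (0:ℝ)) := by
  refine monotoneOn_of_deriv_nonneg (convex_Iio 0) ?_ ?_ ?_
  · intro y hy; exact ((hasDerivAt_Psi (ne_of_lt hy)).continuousAt).continuousWithinAt
  · intro y hy
    rw [interior_Iio] at hy
    exact (hasDerivAt_Psi (ne_of_lt hy)).differentiableAt.differentiableWithinAt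
  · intro y hy
    rw [interior_Iio] at hy
    rw [(hasDerivAt_Psi (ne_of_lt hy)).deriv]
    exact div_nonneg (hfun_nonneg (ne_of_lt hy)) (sq_nonneg y)

lemma Psi_monotoneOn_Ioi : MonotoneOn Psi (Ioi (0:ℝ)) := by
  refine monotoneOn_of_deriv_nonneg (convex_Ioi 0) ?_ ?_ ?_
  · intro y hy; exact ((hasDerivAt_Psi (ne_of_gt hy)).continuousAt).continuousWithinAt
  · intro y hy
    rw [interior_Ioi] at hy
    exact (hasDerivAt_Psi (ne_of_gt hy)).differentiableAt.differentiableWithinAt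
  · intro y hy
    rw [interior_Ioi] at hy
    rw [(hasDerivAt_Psi (ne_of_gt hy)).deriv]
    exact div_nonneg (hfun_nonneg (ne_of_gt hy)) (sq_nonneg y)

lemma Psi_monotone : Monotone Psi := by
  intro a b hab
  rcases eq_or_lt_of_le hab with rfl | hab
  · exact le_refl _
  rcases lt_trichotomy a 0 with ha | rfl | ha
  · rcases lt_trichotomy b 0 with hb | rfl | hb
    · exact Psi_monotoneOn_Iio ha hb hab.le
    · rw [show Psi 0 = 1/2 from if_pos rfl]; exact Psi_le_half ha
    · exact (Psi_le_half ha).trans (half_le_Psi hb)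
  · rw [show Psi 0 = 1/2 from if_pos rfl]; exact half_le_Psi hab
  · exact Psi_monotoneOn_Ioi ha (ha.trans hab) hab.le

lemma expm1_sub_pos {x : ℝ} (hx : x ≠ 0) : 0 < Real.exp x - 1 - x := by
  have := Real.add_one_lt_exp hx
  linarith

lemma q_ne_one {x : ℝ} (hx : x ≠ 0) : (Real.exp x - 1) / x ≠ 1 := by
  intro hcon
  have : Real.exp x - 1 = x := by
    field_simp at hcon; linarith
  have := expm1_sub_pos hx
  linarith

lemma tendsto_R : Tendsto (fun x => (Real.exp x - 1 - x) / x ^ 2) (𝓝[≠] (0:ℝ)) (𝓝 (1/2)) := by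
  rw [← tendsto_sub_nhds_zero_iff]
  have habs : ∀ᶠ x in 𝓝[≠] (0:ℝ), |x| ≤ 1 := by
    apply eventually_nhdsWithin_of_eventually_nhds
    filter_upwards [Metric.closedBall_mem_nhds (0:ℝ) one_pos] with y hy
    simpa [Real.dist_eq] using hy
  apply squeeze_zero_norm' (a := fun x => 2/9 * |x|)
  · filter_upwards [habs, self_mem_nhdsWithin] with x h1 h2
    have hx : x ≠ 0 := h2
    have hb := Real.exp_bound h1 (by norm_num : (0:ℕ) < 3)
    have hsum : ∑ i ∈ Finset.range 3, x ^ i / (Nat.factorial i : ℝ)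
        = 1 + x + x ^ 2 / 2 := by
      simp [Finset.sum_range_succ, Nat.factorial]
    rw [hsum] at hb
    have hb2 : |Real.exp x - (1 + x + x ^ 2 / 2)| ≤ |x| ^ 3 * (2/9) := by
      convert hb using 2
      norm_num [Nat.factorial]
    have hx2 : (0:ℝ) < x ^ 2 := by positivity
    have heq : (Real.exp x - 1 - x) / x ^ 2 - 1/2
        = (Real.exp x - (1 + x + x ^ 2 / 2)) / x ^ 2 := by
      field_simp
      ring
    rw [Real.norm_eq_abs, heq, abs_div, abs_of_pos hx2, div_le_iff₀ hx2]
    calc |Real.exp x - (1 + x + x ^ 2 / 2)| ≤ |x| ^ 3 * (2/9) := hb2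
      _ = 2/9 * |x| * x ^ 2 := by rw [pow_succ' , sq_abs]; ring
  · have : Tendsto (fun x : ℝ => 2/9 * |x|) (𝓝 (0:ℝ)) (𝓝 (2/9 * |0|)) := by
      exact (continuous_const.mul continuous_abs).tendsto 0
    simpa using this.mono_left nhdsWithin_le_nhds

lemma tendsto_Psi_zero : Tendsto Psi (𝓝[≠] (0:ℝ)) (𝓝 (1/2)) := by
  have hq' : Tendsto (fun x => (Real.exp x - 1) / x) (𝓝[≠] (0:ℝ)) (𝓝[≠] (1:ℝ)) := by
    rw [tendsto_nhdsWithin_iff]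
    exact ⟨tendsto_q_one, Eventually.mono self_mem_nhdsWithin fun x hx => q_ne_one hx⟩
  have hlog := hasDerivAt_iff_tendsto_slope.1 (Real.hasDerivAt_log one_ne_zero)
  have hL : Tendsto (fun x => Real.log ((Real.exp x - 1) / x) / ((Real.exp x - 1) / x - 1))
      (𝓝[≠] (0:ℝ)) (𝓝 1) := by
    have := hlog.comp hq'
    rw [inv_one] at this
    refine this.congr fun y => ?_
    simp [slope_def_field]
  have hprod := hL.mul tendsto_R
  rw [one_mul] at hprod
  refine hprod.congr' ?_
  filter_upwards [self_mem_nhdsWithin] with x hx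
  have hx' : x ≠ 0 := hx
  have h1 : (Real.exp x - 1) / x - 1 ≠ 0 := sub_ne_zero.2 (q_ne_one hx')
  have h2 : (Real.exp x - 1 - x) / x ^ 2 = ((Real.exp x - 1) / x - 1) * (1/x) := by
    field_simp
  have hE : Real.exp x - 1 - x ≠ 0 := (expm1_sub_pos hx').ne'
  rw [Psi, if_neg hx', h2]
  field_simp

lemma Psi_continuous : Continuous Psi := by
  rw [continuous_iff_continuousAt]
  intro x
  by_cases hx : x = 0
  · subst hx
    unfold ContinuousAt
    rw [show Psi 0 = 1/2 from if_pos rfl, ← nhdsNE_sup_pure 0,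
      tendsto_sup]
    exact ⟨tendsto_Psi_zero, by
      simpa [show Psi 0 = 1/2 from if_pos rfl] using tendsto_pure_nhds Psi 0⟩
  · exact (hasDerivAt_Psi hx).differentiableAt.continuousAt

lemma tendsto_log_div : Tendsto (fun x : ℝ => Real.log x / x) atTop (𝓝 0) := by
  simpa using Real.isLittleO_log_id_atTop.tendsto_div_nhds_zero

lemma Psi_atTop : Tendsto Psi atTop (𝓝 1) := by
  have h2 : Tendsto (fun x : ℝ => Real.log (1 - Real.exp (-x))) atTop (𝓝 0) := by
    have e1 : Tendsto (fun x : ℝ => Real.exp (-x)) atTop (𝓝 0) :=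
      Real.tendsto_exp_atBot.comp tendsto_neg_atTop_atBot
    have e2 : Tendsto (fun x : ℝ => 1 - Real.exp (-x)) atTop (𝓝 1) := by
      simpa using tendsto_const_nhds.sub e1
    have := (Real.continuousAt_log one_ne_zero).tendsto.comp e2
    simpa [Function.comp_def] using this
  have h3 : Tendsto (fun x : ℝ => x⁻¹) atTop (𝓝 0) := tendsto_inv_atTop_zero
  have hcomb : Tendsto (fun x : ℝ => 1 + Real.log (1 - Real.exp (-x)) * x⁻¹ - Real.log x / x)
      atTop (𝓝 1) := by
    have := ((tendsto_const_nhds : Tendsto (fun _ : ℝ => (1:ℝ)) atTop (𝓝 1)).add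
      (h2.mul h3)).sub tendsto_log_div
    simpa using this
  refine hcomb.congr' ?_
  filter_upwards [eventually_gt_atTop (0:ℝ)] with x hx
  have hex : (0:ℝ) < 1 - Real.exp (-x) := by
    have : Real.exp (-x) < 1 := Real.exp_lt_one_iff.2 (by linarith)
    linarith
  have hE : Real.exp x - 1 = Real.exp x * (1 - Real.exp (-x)) := by
    rw [mul_sub, mul_one, ← Real.exp_add]
    norm_num
  have hpos : (0:ℝ) < Real.exp x - 1 := by rw [hE]; positivity
  have hlog : Real.log ((Real.exp x - 1) / x)
      = x + Real.log (1 - Real.exp (-x)) - Real.log x := by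
    rw [Real.log_div hpos.ne' hx.ne', hE,
      Real.log_mul (Real.exp_pos x).ne' hex.ne', Real.log_exp]
  rw [Psi, if_neg hx.ne', hlog]
  field_simp

lemma Psi_atBot : Tendsto Psi atBot (𝓝 0) := by
  have h3 : Tendsto (fun x : ℝ => x⁻¹) atBot (𝓝 0) := by
    have := (tendsto_neg_atBot_atTop (G := ℝ)).inv_tendsto_atTop.neg
    rw [neg_zero] at this
    exact this.congr fun x => by simp [Pi.inv_apply, inv_neg]
  have h1 : Tendsto (fun x : ℝ => Real.log (1 - Real.exp x)) atBot (𝓝 0) := by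
    have e2 : Tendsto (fun x : ℝ => 1 - Real.exp x) atBot (𝓝 1) := by
      simpa using tendsto_const_nhds.sub Real.tendsto_exp_atBot
    simpa [Function.comp_def] using (Real.continuousAt_log one_ne_zero).tendsto.comp e2
  have h2 : Tendsto (fun x : ℝ => Real.log (-x) * x⁻¹) atBot (𝓝 0) := by
    have := (tendsto_log_div.comp tendsto_neg_atBot_atTop).neg
    rw [neg_zero] at this
    refine this.congr' ?_
    filter_upwards [eventually_lt_atBot (0:ℝ)] with x hx
    have : x ≠ 0 := hx.ne
    simp only [Function.comp_apply]
    field_simp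
  have hcomb : Tendsto (fun x : ℝ => Real.log (1 - Real.exp x) * x⁻¹ - Real.log (-x) * x⁻¹)
      atBot (𝓝 0) := by
    have := (h1.mul h3).sub h2
    simpa using this
  refine hcomb.congr' ?_
  filter_upwards [eventually_lt_atBot (0:ℝ)] with x hx
  have hex : (0:ℝ) < 1 - Real.exp x := by
    have : Real.exp x < 1 := Real.exp_lt_one_iff.2 hx
    linarith
  have hq : (Real.exp x - 1) / x = (1 - Real.exp x) / (-x) := by
    rw [← neg_div_neg_eq]; ring_nf
  have hlog : Real.log ((Real.exp x - 1) / x)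
      = Real.log (1 - Real.exp x) - Real.log (-x) := by
    rw [hq, Real.log_div hex.ne' (by linarith : -x ≠ 0)]
  rw [Psi, if_neg hx.ne, hlog]
  field_simp

theorem Psi_is_cdf :
    Filter.Tendsto Psi Filter.atBot (nhds 0) ∧
    Filter.Tendsto Psi Filter.atTop (nhds 1) ∧
    Monotone Psi ∧ Continuous Psi := by
  exact ⟨Psi_atBot, Psi_atTop, Psi_monotone, Psi_continuous⟩
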